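/- Harnack inequality for positive solutions of the nonlocal equation: assume Ω, J, g satisfy (H1)–(H3) and b ∈ C(Ω̄) ∩ L^∞(Ω) with b > 0. Then for every compact set ω compactly contained in Ω there exists a constant C = C(J, ω, b, g) > 0 such that every positive continuous bounded function u on Ω satisfying L_Ω[u](x) − b(x)u(x) = 0 for all x ∈ Ω obeys u(x) ≤ C u(y) for all x, y ∈ ω. -/

import Mathlib

open MeasureTheory Metric Set Filter

noncomputable def Lop (n : ℕ) (Ω : Set (EuclideanSpace ℝ (Fin n)))
    (J g u : EuclideanSpace ℝ (Fin n) → ℝ) (x : EuclideanSpace ℝ (Fin n)) : ℝ :=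
  ∫ y in Ω, J ((g y)⁻¹ • (x - y)) * u y / (g y) ^ n

noncomputable def lambdaP (n : ℕ) (Ω : Set (EuclideanSpace ℝ (Fin n)))
    (J g a : EuclideanSpace ℝ (Fin n) → ℝ) : ℝ :=
  sSup {l : ℝ | ∃ φ : EuclideanSpace ℝ (Fin n) → ℝ, ContinuousOn φ Ω ∧
    (∀ x ∈ Ω, 0 < φ x) ∧ ∀ x ∈ Ω, Lop n Ω J g φ x + (a x + l) * φ x ≤ 0}

noncomputable def muG (n : ℕ) (g : EuclideanSpace ℝ (Fin n) → ℝ) :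
    Measure (EuclideanSpace ℝ (Fin n)) :=
  volume.withDensity (fun x => ENNReal.ofReal (((g x) ^ n)⁻¹))

noncomputable def shrink (n : ℕ) (Ω : Set (EuclideanSpace ℝ (Fin n))) (θ : ℝ) :
    Set (EuclideanSpace ℝ (Fin n)) :=
  {x ∈ Ω | θ < infDist x (frontier Ω)}

namespace Stmt11

/-- Admissible positive solutions. -/
structure Adm (n : ℕ) (Ω : Set (EuclideanSpace ℝ (Fin n)))
    (J g b : EuclideanSpace ℝ (Fin n) → ℝ) (u : EuclideanSpace ℝ (Fin n) → ℝ) : Prop where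
  cont : ContinuousOn u Ω
  pos : ∀ x ∈ Ω, 0 < u x
  eqn : ∀ x ∈ Ω, Lop n Ω J g u x = b x * u x

/-- Bundled structural data. -/
structure Data (n : ℕ) (Ω : Set (EuclideanSpace ℝ (Fin n)))
    (J g b : EuclideanSpace ℝ (Fin n) → ℝ) (α β r c Cb : ℝ) : Prop where
  hΩo : IsOpen Ω
  hJnn : ∀ z, 0 ≤ J z
  hα : 0 < α
  hβ : 0 < β
  hr : 0 < r
  hc : 0 < c
  hCb : 0 < Cb
  hg : ∀ y ∈ Ω, α ≤ g y ∧ g y ≤ β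
  hJc : ∀ z : EuclideanSpace ℝ (Fin n), ‖z‖ ≤ r → c ≤ J z
  hbU : ∀ x ∈ Ω, |b x| ≤ Cb
  hbpos : ∀ x ∈ closure Ω, 0 < b x

variable {n : ℕ} {Ω : Set (EuclideanSpace ℝ (Fin n))}
  {J g b u : EuclideanSpace ℝ (Fin n) → ℝ} {α β r c Cb : ℝ}

lemma Data.gpos (D : Data n Ω J g b α β r c Cb) {z : EuclideanSpace ℝ (Fin n)}
    (hz : z ∈ Ω) : 0 < g z :=
  lt_of_lt_of_le D.hα (D.hg z hz).1

lemma lop_integrable (D : Data n Ω J g b α β r c Cb) (hu : Adm n Ω J g b u)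
    {x : EuclideanSpace ℝ (Fin n)} (hx : x ∈ Ω) :
    IntegrableOn (fun z => J ((g z)⁻¹ • (x - z)) * u z / (g z) ^ n) Ω volume := by
  by_contra h
  have h0 : Lop n Ω J g u x = 0 := by
    simp only [Lop]
    exact integral_undef h
  have heq := hu.eqn x hx
  rw [h0] at heq
  exact absurd heq.symm
    (ne_of_gt (mul_pos (D.hbpos x (subset_closure hx)) (hu.pos x hx)))

lemma integrand_nonneg (D : Data n Ω J g b α β r c Cb) (hu : Adm n Ω J g b u)
    (x : EuclideanSpace ℝ (Fin n)) {z : EuclideanSpace ℝ (Fin n)} (hz : z ∈ Ω) :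
    0 ≤ J ((g z)⁻¹ • (x - z)) * u z / (g z) ^ n :=
  div_nonneg (mul_nonneg (D.hJnn _) (hu.pos z hz).le) (pow_pos (D.gpos hz) n).le

lemma kernel_lb (D : Data n Ω J g b α β r c Cb)
    {w z : EuclideanSpace ℝ (Fin n)} (hz : z ∈ Ω) (hdist : dist z w < α * r) :
    c ≤ J ((g z)⁻¹ • (w - z)) := by
  apply D.hJc
  have hgz : 0 < g z := D.gpos hz
  rw [norm_smul, norm_inv, Real.norm_eq_abs, abs_of_pos hgz]
  have h1 : ‖w - z‖ = dist z w := by rw [← dist_eq_norm, dist_comm]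
  have h2 : (g z)⁻¹ ≤ α⁻¹ := inv_anti₀ D.hα (D.hg z hz).1
  calc (g z)⁻¹ * ‖w - z‖ ≤ α⁻¹ * (α * r) := by
        rw [h1]
        exact mul_le_mul h2 hdist.le dist_nonneg (inv_nonneg.2 D.hα.le)
    _ = r := by
        field_simp
        rw [mul_comm α r, mul_div_assoc, div_self (ne_of_gt D.hα), mul_one]

lemma integrableOn_u_ball (D : Data n Ω J g b α β r c Cb) (hu : Adm n Ω J g b u)
    {w : EuclideanSpace ℝ (Fin n)} (hw : w ∈ Ω) {t : ℝ} (ht : t ≤ α * r) :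
    IntegrableOn u (Ω ∩ ball w t) volume := by
  have hf := lop_integrable D hu hw
  have hmeasS : MeasurableSet (Ω ∩ ball w t) :=
    D.hΩo.measurableSet.inter measurableSet_ball
  have hfS : IntegrableOn (fun z => J ((g z)⁻¹ • (w - z)) * u z / (g z) ^ n)
      (Ω ∩ ball w t) volume := hf.mono_set inter_subset_left
  refine Integrable.mono' (hfS.const_mul (β ^ n / c))
    ((hu.cont.mono inter_subset_left).aestronglyMeasurable hmeasS) ?_
  refine ae_restrict_of_forall_mem hmeasS ?_
  rintro z ⟨hzΩ, hzb⟩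
  have hgz : 0 < g z := D.gpos hzΩ
  have hgn : 0 < g z ^ n := pow_pos hgz n
  have hgnβ : g z ^ n ≤ β ^ n := pow_le_pow_left₀ hgz.le (D.hg z hzΩ).2 n
  have hJz : c ≤ J ((g z)⁻¹ • (w - z)) :=
    kernel_lb D hzΩ (lt_of_lt_of_le (mem_ball.1 hzb) ht)
  have hupos : 0 < u z := hu.pos z hzΩ
  have hc := D.hc
  have hβ := D.hβ
  rw [Real.norm_eq_abs, abs_of_pos hupos]
  have key : c * u z / β ^ n ≤ J ((g z)⁻¹ • (w - z)) * u z / g z ^ n :=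
    div_le_div₀ (mul_nonneg (D.hJnn _) hupos.le)
      (mul_le_mul_of_nonneg_right hJz hupos.le) hgn hgnβ
  calc u z = β ^ n / c * (c * u z / β ^ n) := by field_simp
    _ ≤ β ^ n / c * (J ((g z)⁻¹ • (w - z)) * u z / g z ^ n) :=
        mul_le_mul_of_nonneg_left key (by positivity)

lemma toolA (D : Data n Ω J g b α β r c Cb) (hu : Adm n Ω J g b u)
    {w : EuclideanSpace ℝ (Fin n)} (hw : w ∈ Ω) {t : ℝ} (ht : t ≤ α * r) :
    c / (Cb * β ^ n) * ∫ z in Ω ∩ ball w t, u z ≤ u w := by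
  have hmeasS : MeasurableSet (Ω ∩ ball w t) :=
    D.hΩo.measurableSet.inter measurableSet_ball
  have hf := lop_integrable D hu hw
  have hint_u := integrableOn_u_ball D hu hw ht
  have hc := D.hc; have hβ := D.hβ; have hCb := D.hCb
  have hβn : (0:ℝ) < β ^ n := pow_pos hβ n
  have h1 : ∫ z in Ω ∩ ball w t, c / β ^ n * u z
      ≤ ∫ z in Ω ∩ ball w t, J ((g z)⁻¹ • (w - z)) * u z / (g z) ^ n := by
    refine setIntegral_mono_on (hint_u.const_mul _) (hf.mono_set inter_subset_left)
      hmeasS ?_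
    rintro z ⟨hzΩ, hzb⟩
    have hgz : 0 < g z := D.gpos hzΩ
    have hgn : 0 < g z ^ n := pow_pos hgz n
    have hgnβ : g z ^ n ≤ β ^ n := pow_le_pow_left₀ hgz.le (D.hg z hzΩ).2 n
    have hJz : c ≤ J ((g z)⁻¹ • (w - z)) :=
      kernel_lb D hzΩ (lt_of_lt_of_le (mem_ball.1 hzb) ht)
    have hupos : 0 < u z := hu.pos z hzΩ
    rw [div_mul_eq_mul_div]
    exact div_le_div₀ (mul_nonneg (D.hJnn _) hupos.le)
      (mul_le_mul_of_nonneg_right hJz hupos.le) hgn hgnβ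
  have h2 : ∫ z in Ω ∩ ball w t, J ((g z)⁻¹ • (w - z)) * u z / (g z) ^ n
      ≤ ∫ z in Ω, J ((g z)⁻¹ • (w - z)) * u z / (g z) ^ n := by
    refine setIntegral_mono_set hf ?_ (HasSubset.Subset.eventuallyLE inter_subset_left)
    exact ae_restrict_of_forall_mem D.hΩo.measurableSet
      (fun z hz => integrand_nonneg D hu w hz)
  have h3 : ∫ z in Ω, J ((g z)⁻¹ • (w - z)) * u z / (g z) ^ n = b w * u w := by
    simpa only [Lop] using hu.eqn w hw
  have h4 : ∫ z in Ω ∩ ball w t, c / β ^ n * u z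
      = c / β ^ n * ∫ z in Ω ∩ ball w t, u z := integral_const_mul _ _
  have h5 : b w * u w ≤ Cb * u w :=
    mul_le_mul_of_nonneg_right ((le_abs_self _).trans (D.hbU w hw)) (hu.pos w hw).le
  have h6 : c / β ^ n * ∫ z in Ω ∩ ball w t, u z ≤ Cb * u w := by
    rw [← h4]; linarith
  rw [show c / (Cb * β ^ n) = c / β ^ n / Cb by rw [div_div, mul_comm]]
  rw [div_mul_eq_mul_div, div_le_iff₀ hCb]
  linarith

lemma volball_pos (D : Data n Ω J g b α β r c Cb)
    {ξ : EuclideanSpace ℝ (Fin n)} (hξ : ξ ∈ Ω) {t : ℝ} (ht : 0 < t) :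
    0 < (volume (Ω ∩ ball ξ t)).toReal := by
  obtain ⟨ε, hε0, hεsub⟩ := Metric.isOpen_iff.1 D.hΩo ξ hξ
  have hsub : ball ξ (min ε t) ⊆ Ω ∩ ball ξ t :=
    subset_inter ((ball_subset_ball (min_le_left _ _)).trans hεsub)
      (ball_subset_ball (min_le_right _ _))
  have hpos : 0 < volume (Ω ∩ ball ξ t) :=
    lt_of_lt_of_le (measure_ball_pos volume ξ (by positivity)) (measure_mono hsub)
  have hfin : volume (Ω ∩ ball ξ t) ≠ ⊤ :=
    ne_top_of_le_ne_top measure_ball_lt_top.ne (measure_mono inter_subset_right)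
  exact ENNReal.toReal_pos hpos.ne' hfin

/-- Tool B/D : comparison of nearby ball masses. -/
lemma toolD (D : Data n Ω J g b α β r c Cb) (hu : Adm n Ω J g b u)
    {p ξ : EuclideanSpace ℝ (Fin n)} (hξ : ξ ∈ Ω) (hdist : dist p ξ ≤ α * r / 4) :
    ∫ z in Ω ∩ ball p (α * r / 4), u z ≤
      (c / (Cb * β ^ n) * (volume (Ω ∩ ball ξ (α * r / 4))).toReal)⁻¹ *
        ∫ z in Ω ∩ ball ξ (α * r / 4), u z := by
  have hαr : 0 < α * r := mul_pos D.hα D.hr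
  have hκ : 0 < c / (Cb * β ^ n) := by
    have := D.hc; have := D.hCb; have : (0:ℝ) < β ^ n := pow_pos D.hβ n
    positivity
  set κ := c / (Cb * β ^ n) with hκdef
  set m := ∫ z in Ω ∩ ball p (α * r / 4), u z with hm
  have hmeasS : MeasurableSet (Ω ∩ ball ξ (α * r / 4)) :=
    D.hΩo.measurableSet.inter measurableSet_ball
  have hvol : 0 < (volume (Ω ∩ ball ξ (α * r / 4))).toReal :=
    volball_pos D hξ (by positivity)
  have hvolfin : volume (Ω ∩ ball ξ (α * r / 4)) ≠ ⊤ :=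
    ne_top_of_le_ne_top measure_ball_lt_top.ne (measure_mono inter_subset_right)
  -- pointwise bound on the ξ-ball
  have hpt : ∀ v ∈ Ω ∩ ball ξ (α * r / 4), κ * m ≤ u v := by
    rintro v ⟨hvΩ, hvb⟩
    have hsubset : Ω ∩ ball p (α * r / 4) ⊆ Ω ∩ ball v (α * r) := by
      rintro z ⟨hzΩ, hzb⟩
      refine ⟨hzΩ, mem_ball.2 ?_⟩
      have h1 : dist z p < α * r / 4 := mem_ball.1 hzb
      have h2 : dist v ξ < α * r / 4 := mem_ball.1 hvb
      calc dist z v ≤ dist z p + dist p ξ + dist ξ v := dist_triangle4 z p ξ v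
        _ < α * r / 4 + α * r / 4 + α * r / 4 := by
            have := dist_comm ξ v ▸ h2
            linarith [hdist]
        _ < α * r := by linarith
    have hmono : m ≤ ∫ z in Ω ∩ ball v (α * r), u z := by
      refine setIntegral_mono_set (integrableOn_u_ball D hu hvΩ le_rfl) ?_
        (HasSubset.Subset.eventuallyLE hsubset)
      exact ae_restrict_of_forall_mem
        (D.hΩo.measurableSet.inter measurableSet_ball)
        (fun z hz => (hu.pos z hz.1).le)
    calc κ * m ≤ κ * ∫ z in Ω ∩ ball v (α * r), u z :=
          mul_le_mul_of_nonneg_left hmono hκ.le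
      _ ≤ u v := toolA D hu hvΩ le_rfl
  -- integrate the pointwise bound
  have hconst : ∫ z in Ω ∩ ball ξ (α * r / 4), κ * m
      ≤ ∫ z in Ω ∩ ball ξ (α * r / 4), u z := by
    refine setIntegral_mono_on ?_ (integrableOn_u_ball D hu hξ (by nlinarith)) hmeasS hpt
    exact integrableOn_const hvolfin
  rw [setIntegral_const, smul_eq_mul] at hconst
  have hpos' : 0 < κ * (volume (Ω ∩ ball ξ (α * r / 4))).toReal := mul_pos hκ hvol
  rw [inv_mul_eq_div, le_div_iff₀ hpos']
  calc m * (κ * (volume (Ω ∩ ball ξ (α * r / 4))).toReal)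
      = (volume (Ω ∩ ball ξ (α * r / 4))).toReal * (κ * m) := by ring
    _ ≤ ∫ z in Ω ∩ ball ξ (α * r / 4), u z := hconst

/-- The chain (clopen/connectedness) lemma. -/
lemma chain (D : Data n Ω J g b α β r c Cb) (hΩc : IsPreconnected Ω)
    {y₀ : EuclideanSpace ℝ (Fin n)} (hy₀ : y₀ ∈ Ω) :
    ∀ ξ ∈ Ω, ∃ T : ℝ, 0 < T ∧ ∀ u, Adm n Ω J g b u →
      ((∫ z in Ω ∩ ball ξ (α * r / 4), u z)
          ≤ T * ∫ z in Ω ∩ ball y₀ (α * r / 4), u z) ∧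
      ((∫ z in Ω ∩ ball y₀ (α * r / 4), u z)
          ≤ T * ∫ z in Ω ∩ ball ξ (α * r / 4), u z) := by
  have hαr : 0 < α * r := mul_pos D.hα D.hr
  have hκ : 0 < c / (Cb * β ^ n) := by
    have := D.hc; have := D.hCb; have : (0:ℝ) < β ^ n := pow_pos D.hβ n
    positivity
  set κ := c / (Cb * β ^ n) with hκdef
  set S : Set (EuclideanSpace ℝ (Fin n)) :=
    {ξ | ξ ∈ Ω ∧ ∃ T : ℝ, 0 < T ∧ ∀ u, Adm n Ω J g b u →
      ((∫ z in Ω ∩ ball ξ (α * r / 4), u z)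
          ≤ T * ∫ z in Ω ∩ ball y₀ (α * r / 4), u z) ∧
      ((∫ z in Ω ∩ ball y₀ (α * r / 4), u z)
          ≤ T * ∫ z in Ω ∩ ball ξ (α * r / 4), u z)} with hSdef
  have hmass_nonneg : ∀ u, Adm n Ω J g b u → ∀ q : EuclideanSpace ℝ (Fin n),
      0 ≤ ∫ z in Ω ∩ ball q (α * r / 4), u z := by
    intro u hu q
    exact setIntegral_nonneg (D.hΩo.measurableSet.inter measurableSet_ball)
      (fun z hz => (hu.pos z hz.1).le)
  -- propagation step
  have hprop : ∀ ξ ∈ S, ∀ ζ ∈ Ω, dist ζ ξ ≤ α * r / 4 → ζ ∈ S := by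
    rintro ξ ⟨hξΩ, T, hT, hTs⟩ ζ hζΩ hζd
    have hD1 : 0 < (κ * (volume (Ω ∩ ball ξ (α * r / 4))).toReal)⁻¹ := by
      have := volball_pos D hξΩ (show (0:ℝ) < α * r / 4 by positivity)
      positivity
    have hD2 : 0 < (κ * (volume (Ω ∩ ball ζ (α * r / 4))).toReal)⁻¹ := by
      have := volball_pos D hζΩ (show (0:ℝ) < α * r / 4 by positivity)
      positivity
    set D1 := (κ * (volume (Ω ∩ ball ξ (α * r / 4))).toReal)⁻¹
    set D2 := (κ * (volume (Ω ∩ ball ζ (α * r / 4))).toReal)⁻¹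
    refine ⟨hζΩ, max (D1 * T) (T * D2), lt_max_of_lt_left (mul_pos hD1 hT), ?_⟩
    intro u hu
    obtain ⟨hT1, hT2⟩ := hTs u hu
    constructor
    · calc (∫ z in Ω ∩ ball ζ (α * r / 4), u z)
          ≤ D1 * ∫ z in Ω ∩ ball ξ (α * r / 4), u z := toolD D hu hξΩ hζd
        _ ≤ D1 * (T * ∫ z in Ω ∩ ball y₀ (α * r / 4), u z) :=
            mul_le_mul_of_nonneg_left hT1 hD1.le
        _ = D1 * T * ∫ z in Ω ∩ ball y₀ (α * r / 4), u z := by ring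
        _ ≤ max (D1 * T) (T * D2) * ∫ z in Ω ∩ ball y₀ (α * r / 4), u z :=
            mul_le_mul_of_nonneg_right (le_max_left _ _) (hmass_nonneg u hu y₀)
    · have hd' : dist ξ ζ ≤ α * r / 4 := by rwa [dist_comm]
      calc (∫ z in Ω ∩ ball y₀ (α * r / 4), u z)
          ≤ T * ∫ z in Ω ∩ ball ξ (α * r / 4), u z := hT2
        _ ≤ T * (D2 * ∫ z in Ω ∩ ball ζ (α * r / 4), u z) :=
            mul_le_mul_of_nonneg_left (toolD D hu hζΩ hd') hT.le
        _ = T * D2 * ∫ z in Ω ∩ ball ζ (α * r / 4), u z := by ring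
        _ ≤ max (D1 * T) (T * D2) * ∫ z in Ω ∩ ball ζ (α * r / 4), u z :=
            mul_le_mul_of_nonneg_right (le_max_right _ _) (hmass_nonneg u hu ζ)
  have hy₀S : y₀ ∈ S := by
    refine ⟨hy₀, 1, one_pos, ?_⟩
    intro u hu
    constructor <;> rw [one_mul]
  -- connectedness argument
  intro ξ hξ
  by_contra hcon
  have hξS : ξ ∉ S := fun h => hcon h.2
  set U : Set (EuclideanSpace ℝ (Fin n)) := ⋃ ζ ∈ S, ball ζ (α * r / 4) with hU
  set V : Set (EuclideanSpace ℝ (Fin n)) :=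
    ⋃ ζ ∈ {ζ | ζ ∈ Ω ∧ ζ ∉ S}, ball ζ (α * r / 4) with hV
  have hUo : IsOpen U := isOpen_biUnion fun _ _ => isOpen_ball
  have hVo : IsOpen V := isOpen_biUnion fun _ _ => isOpen_ball
  have hcover : Ω ⊆ U ∪ V := by
    intro ζ hζ
    by_cases hζS : ζ ∈ S
    · exact Or.inl (mem_biUnion hζS (mem_ball_self (by positivity)))
    · exact Or.inr (mem_biUnion ⟨hζ, hζS⟩ (mem_ball_self (by positivity)))
  have hUne : (Ω ∩ U).Nonempty :=
    ⟨y₀, hy₀, mem_biUnion hy₀S (mem_ball_self (by positivity))⟩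
  have hVne : (Ω ∩ V).Nonempty :=
    ⟨ξ, hξ, mem_biUnion ⟨hξ, hξS⟩ (mem_ball_self (by positivity))⟩
  obtain ⟨z, hzΩ, hzU, hzV⟩ := hΩc U V hUo hVo hcover hUne hVne
  obtain ⟨ζ₁, hζ₁S, hz1⟩ := mem_iUnion₂.1 hzU
  obtain ⟨ζ₂, hζ₂, hz2⟩ := mem_iUnion₂.1 hzV
  have hzS : z ∈ S := hprop ζ₁ hζ₁S z hzΩ (le_of_lt (mem_ball.1 hz1))
  have : ζ₂ ∈ S := by
    refine hprop z hzS ζ₂ hζ₂.1 ?_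
    rw [dist_comm]
    exact le_of_lt (mem_ball.1 hz2)
  exact hζ₂.2 this

/-- finite union integral bound -/
lemma biUnion_integral_le {ι : Type*} (F : Finset ι)
    (Sf : ι → Set (EuclideanSpace ℝ (Fin n))) (f : EuclideanSpace ℝ (Fin n) → ℝ)
    (hm : ∀ i ∈ F, MeasurableSet (Sf i))
    (hi : ∀ i ∈ F, IntegrableOn f (Sf i) volume)
    (hpos : ∀ i ∈ F, ∀ x ∈ Sf i, 0 ≤ f x) :
    ∫ x in ⋃ i ∈ F, Sf i, f x ≤ ∑ i ∈ F, ∫ x in Sf i, f x := by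
  classical
  induction F using Finset.induction_on with
  | empty => simp
  | insert _ _ ha ih =>
    rename_i a F'
    rw [Finset.set_biUnion_insert, Finset.sum_insert ha]
    have hm' : ∀ i ∈ F', MeasurableSet (Sf i) := fun i hi' => hm i (Finset.mem_insert_of_mem hi')
    have hi' : ∀ i ∈ F', IntegrableOn f (Sf i) volume :=
      fun i h => hi i (Finset.mem_insert_of_mem h)
    have hpos' : ∀ i ∈ F', ∀ x ∈ Sf i, 0 ≤ f x :=
      fun i h => hpos i (Finset.mem_insert_of_mem h)
    have hUm : MeasurableSet (⋃ i ∈ F', Sf i) :=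
      MeasurableSet.biUnion F'.countable_toSet hm'
    have hUint : IntegrableOn f (⋃ i ∈ F', Sf i) volume :=
      integrableOn_finset_iUnion.2 hi'
    have hUpos : ∀ x ∈ ⋃ i ∈ F', Sf i, 0 ≤ f x := by
      intro x hx
      obtain ⟨i, hiF, hxi⟩ := mem_iUnion₂.1 hx
      exact hpos' i hiF x hxi
    have key : ∫ x in Sf a ∪ ⋃ i ∈ F', Sf i, f x
        ≤ (∫ x in Sf a, f x) + ∫ x in ⋃ i ∈ F', Sf i, f x := by
      rw [← union_diff_self, setIntegral_union disjoint_sdiff_right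
        (hUm.diff (hm a (Finset.mem_insert_self a F')))
        (hi a (Finset.mem_insert_self a F')) (hUint.mono_set diff_subset)]
      have : ∫ x in (⋃ i ∈ F', Sf i) \ Sf a, f x ≤ ∫ x in ⋃ i ∈ F', Sf i, f x := by
        refine setIntegral_mono_set hUint ?_ (HasSubset.Subset.eventuallyLE diff_subset)
        exact ae_restrict_of_forall_mem hUm hUpos
      linarith
    exact key.trans (by linarith [ih hm' hi' hpos'])

end Stmt11

set_option maxHeartbeats 1000000 in
open Stmt11 in
theorem stmt_11 (n : ℕ) (hn : 1 ≤ n)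
    (Ω : Set (EuclideanSpace ℝ (Fin n))) (J g b : EuclideanSpace ℝ (Fin n) → ℝ)
    (hΩo : IsOpen Ω) (hΩc : IsConnected Ω)
    (hJcont : Continuous J) (hJsupp : HasCompactSupport J)
    (hJnn : ∀ z, 0 ≤ J z) (hJ0 : 0 < J 0)
    (α β : ℝ) (hα : 0 < α) (hg : ∀ y ∈ Ω, α ≤ g y ∧ g y ≤ β)
    (hbcont : ContinuousOn b (closure Ω)) (hbbdd : ∃ C, ∀ x ∈ Ω, |b x| ≤ C)
    (hbpos : ∀ x ∈ closure Ω, 0 < b x)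
    (ω : Set (EuclideanSpace ℝ (Fin n))) (hωcpt : IsCompact ω) (hωsub : ω ⊆ Ω) :
    ∃ C > (0:ℝ), ∀ u : EuclideanSpace ℝ (Fin n) → ℝ, ContinuousOn u Ω → (∀ x ∈ Ω, 0 < u x) →
      (∃ B, ∀ x ∈ Ω, u x ≤ B) →
      (∀ x ∈ Ω, Lop n Ω J g u x - b x * u x = 0) →
      ∀ x ∈ ω, ∀ y ∈ ω, u x ≤ C * u y := by
  classical
  rcases ω.eq_empty_or_nonempty with hωe | ⟨y₀, hy₀ω⟩
  · refine ⟨1, one_pos, ?_⟩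
    intro u _ _ _ _ x hx
    rw [hωe] at hx
    exact absurd hx (notMem_empty x)
  obtain ⟨z₀, hz₀Ω⟩ := hΩc.nonempty
  have hβ : 0 < β := lt_of_lt_of_le hα (le_trans (hg z₀ hz₀Ω).1 (hg z₀ hz₀Ω).2)
  obtain ⟨Cb, hCb⟩ := hbbdd
  have hCb0 : 0 < Cb :=
    lt_of_lt_of_le (hbpos z₀ (subset_closure hz₀Ω)) ((le_abs_self _).trans (hCb _ hz₀Ω))
  -- a radius on which J is bounded below
  obtain ⟨r0, hr0, hr0c⟩ :=
    Metric.continuousAt_iff.1 hJcont.continuousAt (J 0 / 2) (half_pos hJ0)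
  set r := r0 / 2 with hrdef
  have hr : 0 < r := by positivity
  set c := J 0 / 2 with hcdef
  have hc : 0 < c := half_pos hJ0
  have hJc : ∀ z : EuclideanSpace ℝ (Fin n), ‖z‖ ≤ r → c ≤ J z := by
    intro z hz
    have hd : dist z 0 < r0 := by
      rw [dist_zero_right]; rw [hrdef] at hz; linarith
    have h := hr0c hd
    rw [Real.dist_eq] at h
    have h2 := (abs_lt.1 h).1
    rw [hcdef]; linarith
  -- J bounded above
  have h0supp : (0 : EuclideanSpace ℝ (Fin n)) ∈ tsupport J :=
    subset_tsupport J (by simp [Function.mem_support, ne_of_gt hJ0])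
  obtain ⟨zM, hzM, hzMmax⟩ := hJsupp.exists_isMaxOn ⟨0, h0supp⟩ hJcont.continuousOn
  set Jm := J zM with hJmdef
  have hJm : ∀ z, J z ≤ Jm := by
    intro z
    by_cases hz : z ∈ tsupport J
    · exact hzMmax hz
    · rw [image_eq_zero_of_notMem_tsupport hz]
      exact le_trans hJ0.le (hzMmax h0supp)
  have hJm0 : 0 < Jm := lt_of_lt_of_le hJ0 (hzMmax h0supp)
  -- support radius of J
  obtain ⟨R0, hR0⟩ := (Metric.isBounded_iff_subset_closedBall 0).1 hJsupp.isBounded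
  set R := max R0 1 with hRdef
  have hR : 0 < R := lt_of_lt_of_le one_pos (le_max_right _ _)
  have hJvan : ∀ z : EuclideanSpace ℝ (Fin n), R < ‖z‖ → J z = 0 := by
    intro z hz
    apply image_eq_zero_of_notMem_tsupport
    intro hmem
    have h1 := hR0 hmem
    rw [mem_closedBall, dist_zero_right] at h1
    exact absurd (h1.trans (le_max_left R0 1)) (not_le.2 hz)
  have D : Stmt11.Data n Ω J g b α β r c Cb :=
    ⟨hΩo, hJnn, hα, hβ, hr, hc, hCb0, hg, hJc, hCb, hbpos⟩
  have hαr : 0 < α * r := mul_pos hα hr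
  set κ := c / (Cb * β ^ n) with hκdef
  have hκ : 0 < κ := div_pos hc (mul_pos hCb0 (pow_pos hβ n))
  -- minimum of b on ω
  have hωcl : ω ⊆ closure Ω := fun z hz => subset_closure (hωsub hz)
  obtain ⟨ym, hymω, hymmin⟩ := hωcpt.exists_isMinOn ⟨y₀, hy₀ω⟩ (hbcont.mono hωcl)
  have hbm : 0 < b ym := hbpos ym (hωcl hymω)
  -- uniform interior ball volume on ω
  obtain ⟨d, hd0, hdsub⟩ := hωcpt.exists_thickening_subset_open hΩo hωsub
  set t₀ := min (α * r / 4) d with ht₀def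
  have ht₀ : 0 < t₀ := lt_min (by positivity) hd0
  set v₀ := (volume (ball (0 : EuclideanSpace ℝ (Fin n)) t₀)).toReal with hv₀def
  have hv₀ : 0 < v₀ :=
    ENNReal.toReal_pos (measure_ball_pos volume _ ht₀).ne' measure_ball_lt_top.ne
  have hv₀le : ∀ y ∈ ω, v₀ ≤ (volume (Ω ∩ ball y (α * r / 4))).toReal := by
    intro y hy
    have hsub : ball y t₀ ⊆ Ω ∩ ball y (α * r / 4) := by
      intro z hz
      exact ⟨hdsub (mem_thickening_iff.2
        ⟨y, hy, lt_of_lt_of_le (mem_ball.1 hz) (min_le_right _ _)⟩),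
        ball_subset_ball (min_le_left _ _) hz⟩
    have hfin : volume (Ω ∩ ball y (α * r / 4)) ≠ ⊤ :=
      ne_top_of_le_ne_top measure_ball_lt_top.ne (measure_mono inter_subset_right)
    have hb0 : volume (ball y t₀)
        = volume (ball (0 : EuclideanSpace ℝ (Fin n)) t₀) :=
      Measure.addHaar_ball_center volume y t₀
    rw [hv₀def, ← hb0]
    exact ENNReal.toReal_mono hfin (measure_mono hsub)
  -- covering of the ρ-neighbourhood of ω
  set ρ := β * R + 1 with hρdef
  have hρ : 0 < ρ := by positivity
  obtain ⟨t, ht⟩ := (hωcpt.cthickening (r := ρ)).elim_finite_subcover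
    (fun p : EuclideanSpace ℝ (Fin n) => ball p (α * r / 8))
    (fun _ => isOpen_ball)
    (fun z _ => mem_iUnion.2 ⟨z, mem_ball_self (by positivity)⟩)
  set F : Finset (EuclideanSpace ℝ (Fin n)) :=
    t.filter (fun p => (Ω ∩ ball p (α * r / 8)).Nonempty) with hFdef
  have hchoice : ∀ p ∈ F, ∃ q, q ∈ Ω ∩ ball p (α * r / 8) := by
    intro p hp
    rw [hFdef, Finset.mem_filter] at hp
    exact hp.2
  choose! ξp hξpF using hchoice
  -- chain constants
  have hchain := Stmt11.chain D hΩc.isPreconnected (hωsub hy₀ω)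
  choose! T hTpos hTspec using hchain
  -- covering of ω itself
  obtain ⟨G, hG⟩ := hωcpt.elim_finite_subcover
    (fun q : ω => ball (q : EuclideanSpace ℝ (Fin n)) (α * r / 4))
    (fun _ => isOpen_ball)
    (fun z hz => mem_iUnion.2 ⟨⟨z, hz⟩, mem_ball_self (by positivity)⟩)
  set S1 := ∑ p ∈ F, T (ξp p) with hS1def
  set S2 := ∑ q ∈ G, T (q : EuclideanSpace ℝ (Fin n)) with hS2def
  have hS1nn : 0 ≤ S1 :=
    Finset.sum_nonneg fun p hp => (hTpos _ (hξpF p hp).1).le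
  have hS2nn : 0 ≤ S2 :=
    Finset.sum_nonneg fun q _ => (hTpos _ (hωsub q.2)).le
  set Duni := (κ * v₀)⁻¹ with hDunidef
  have hDuni0 : 0 < Duni := inv_pos.2 (mul_pos hκ hv₀)
  set C := Jm / α ^ n * (1 + S1) * ((1 + S2) * (Duni * κ⁻¹)) / b ym with hCdef
  have hC : 0 < C := by
    apply div_pos _ hbm
    apply mul_pos (mul_pos (div_pos hJm0 (pow_pos hα n)) (by linarith))
    exact mul_pos (by linarith) (mul_pos hDuni0 (inv_pos.2 hκ))
  refine ⟨C, hC, ?_⟩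
  intro u hucont hupos hubdd heq0
  have hu : Stmt11.Adm n Ω J g b u :=
    ⟨hucont, hupos, fun x hx => sub_eq_zero.1 (heq0 x hx)⟩
  intro x hxω y hyω
  have hxΩ := hωsub hxω
  have hyΩ := hωsub hyω
  have hmass_nonneg : ∀ q : EuclideanSpace ℝ (Fin n),
      0 ≤ ∫ z in Ω ∩ ball q (α * r / 4), u z := fun q =>
    setIntegral_nonneg (hΩo.measurableSet.inter measurableSet_ball)
      (fun z hz => (hupos z hz.1).le)
  have hfx := Stmt11.lop_integrable D hu hxΩ
  -- the union of the small balls covering the relevant region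
  set W := ⋃ p ∈ F, (Ω ∩ ball (ξp p) (α * r / 4)) with hWdef
  have hWsub : W ⊆ Ω := by
    intro z hz
    obtain ⟨p, hp, hzp⟩ := mem_iUnion₂.1 hz
    exact hzp.1
  have hWm : MeasurableSet W :=
    MeasurableSet.biUnion F.countable_toSet
      (fun p _ => hΩo.measurableSet.inter measurableSet_ball)
  have hcoverW : ∀ z ∈ Ω, dist x z < ρ → z ∈ W := by
    intro z hzΩ hdist
    have hzE : z ∈ cthickening ρ ω :=
      mem_cthickening_of_dist_le z x ρ ω hxω (by rw [dist_comm] at hdist; linarith [hdist.le])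
    obtain ⟨p, hpt, hzp⟩ := mem_iUnion₂.1 (ht hzE)
    have hpF : p ∈ F := by
      rw [hFdef, Finset.mem_filter]
      exact ⟨hpt, ⟨z, hzΩ, hzp⟩⟩
    have hne := hξpF p hpF
    refine mem_iUnion₂.2 ⟨p, hpF, hzΩ, mem_ball.2 ?_⟩
    have h1 : dist z p < α * r / 8 := mem_ball.1 hzp
    have h2 : dist (ξp p) p < α * r / 8 := mem_ball.1 hne.2
    calc dist z (ξp p) ≤ dist z p + dist p (ξp p) := dist_triangle _ _ _
      _ < α * r / 8 + α * r / 8 := by rw [dist_comm p (ξp p)]; linarith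
      _ ≤ α * r / 4 := by linarith
  have hzero : ∫ z in Ω \ W, J ((g z)⁻¹ • (x - z)) * u z / (g z) ^ n = 0 := by
    apply integral_eq_zero_of_ae
    refine ae_restrict_of_forall_mem (hΩo.measurableSet.diff hWm) ?_
    rintro z ⟨hzΩ, hzW⟩
    have hdist : ρ ≤ dist x z := by
      by_contra hlt
      exact hzW (hcoverW z hzΩ (not_le.1 hlt))
    have hgz := D.gpos hzΩ
    have hJz : J ((g z)⁻¹ • (x - z)) = 0 := by
      apply hJvan
      rw [norm_smul, norm_inv, Real.norm_eq_abs, abs_of_pos hgz]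
      have h1 : ‖x - z‖ = dist x z := (dist_eq_norm x z).symm
      have h2 : β⁻¹ ≤ (g z)⁻¹ := inv_anti₀ hgz (D.hg z hzΩ).2
      have h3 : β⁻¹ * ρ ≤ (g z)⁻¹ * ‖x - z‖ := by
        rw [h1]
        exact mul_le_mul h2 hdist (by positivity) (by positivity)
      have h4 : β⁻¹ * ρ = R + β⁻¹ := by
        rw [hρdef]; field_simp
      have h5 : (0:ℝ) < β⁻¹ := by positivity
      linarith
    show J ((g z)⁻¹ • (x - z)) * u z / (g z) ^ n = 0
    rw [hJz, zero_mul, zero_div]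
  have hsplit : ∫ z in Ω, J ((g z)⁻¹ • (x - z)) * u z / (g z) ^ n
      = (∫ z in W, J ((g z)⁻¹ • (x - z)) * u z / (g z) ^ n)
        + ∫ z in Ω \ W, J ((g z)⁻¹ • (x - z)) * u z / (g z) ^ n := by
    rw [← setIntegral_union disjoint_sdiff_right (hΩo.measurableSet.diff hWm)
      (hfx.mono_set hWsub) (hfx.mono_set diff_subset), union_diff_cancel hWsub]
  have hWsum : ∫ z in W, J ((g z)⁻¹ • (x - z)) * u z / (g z) ^ n
      ≤ ∑ p ∈ F, ∫ z in Ω ∩ ball (ξp p) (α * r / 4),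
          J ((g z)⁻¹ • (x - z)) * u z / (g z) ^ n :=
    Stmt11.biUnion_integral_le F _ _
      (fun p _ => hΩo.measurableSet.inter measurableSet_ball)
      (fun p _ => hfx.mono_set inter_subset_left)
      (fun p _ z hz => Stmt11.integrand_nonneg D hu x hz.1)
  have hpiece : ∀ p ∈ F,
      (∫ z in Ω ∩ ball (ξp p) (α * r / 4), J ((g z)⁻¹ • (x - z)) * u z / (g z) ^ n)
      ≤ Jm / α ^ n * ∫ z in Ω ∩ ball (ξp p) (α * r / 4), u z := by
    intro p hp
    have hint_u := Stmt11.integrableOn_u_ball D hu (hξpF p hp).1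
      (show α * r / 4 ≤ α * r by linarith)
    rw [← integral_const_mul]
    refine setIntegral_mono_on (hfx.mono_set inter_subset_left) (hint_u.const_mul _)
      (hΩo.measurableSet.inter measurableSet_ball) ?_
    rintro z ⟨hzΩ, _⟩
    have hgz := D.gpos hzΩ
    have hgn : 0 < g z ^ n := pow_pos hgz n
    have hαn : (0:ℝ) < α ^ n := pow_pos hα n
    have hgαn : α ^ n ≤ g z ^ n := pow_le_pow_left₀ hα.le (D.hg z hzΩ).1 n
    have hupos' : 0 < u z := hupos z hzΩ
    rw [div_mul_eq_mul_div]
    exact div_le_div₀ (mul_nonneg hJm0.le hupos'.le)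
      (mul_le_mul_of_nonneg_right (hJm _) hupos'.le) hαn hgαn
  have hx_up : b x * u x
      ≤ Jm / α ^ n * ∑ p ∈ F, ∫ z in Ω ∩ ball (ξp p) (α * r / 4), u z := by
    have heqx := hu.eqn x hxΩ
    have hLop : Lop n Ω J g u x
        = ∫ z in Ω, J ((g z)⁻¹ • (x - z)) * u z / (g z) ^ n := rfl
    calc b x * u x = ∫ z in Ω, J ((g z)⁻¹ • (x - z)) * u z / (g z) ^ n := by
          rw [← hLop, heqx]
      _ = ∫ z in W, J ((g z)⁻¹ • (x - z)) * u z / (g z) ^ n := by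
          rw [hsplit, hzero, add_zero]
      _ ≤ ∑ p ∈ F, ∫ z in Ω ∩ ball (ξp p) (α * r / 4),
            J ((g z)⁻¹ • (x - z)) * u z / (g z) ^ n := hWsum
      _ ≤ ∑ p ∈ F, Jm / α ^ n * ∫ z in Ω ∩ ball (ξp p) (α * r / 4), u z :=
          Finset.sum_le_sum hpiece
      _ = Jm / α ^ n * ∑ p ∈ F, ∫ z in Ω ∩ ball (ξp p) (α * r / 4), u z := by
          rw [Finset.mul_sum]
  have hItot : ∑ p ∈ F, (∫ z in Ω ∩ ball (ξp p) (α * r / 4), u z)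
      ≤ S1 * ∫ z in Ω ∩ ball y₀ (α * r / 4), u z := by
    rw [hS1def, Finset.sum_mul]
    exact Finset.sum_le_sum fun p hp => (hTspec (ξp p) (hξpF p hp).1 u hu).1
  -- the y-side
  obtain ⟨q, hqG, hyq⟩ := mem_iUnion₂.1 (hG hyω)
  have hqΩ : (q : EuclideanSpace ℝ (Fin n)) ∈ Ω := hωsub q.2
  have hMy₀ : ∫ z in Ω ∩ ball y₀ (α * r / 4), u z
      ≤ T q * ∫ z in Ω ∩ ball (q : EuclideanSpace ℝ (Fin n)) (α * r / 4), u z :=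
    (hTspec _ hqΩ u hu).2
  have hMq : ∫ z in Ω ∩ ball (q : EuclideanSpace ℝ (Fin n)) (α * r / 4), u z
      ≤ (κ * (volume (Ω ∩ ball y (α * r / 4))).toReal)⁻¹
          * ∫ z in Ω ∩ ball y (α * r / 4), u z :=
    Stmt11.toolD D hu hyΩ (by rw [dist_comm]; exact (mem_ball.1 hyq).le)
  have hDy : (κ * (volume (Ω ∩ ball y (α * r / 4))).toReal)⁻¹ ≤ Duni := by
    rw [hDunidef]
    exact inv_anti₀ (mul_pos hκ hv₀)
      (mul_le_mul_of_nonneg_left (hv₀le y hyω) hκ.le)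
  have hMyA : κ * ∫ z in Ω ∩ ball y (α * r / 4), u z ≤ u y :=
    Stmt11.toolA D hu hyΩ (show α * r / 4 ≤ α * r by linarith)
  have hMy : ∫ z in Ω ∩ ball y (α * r / 4), u z ≤ κ⁻¹ * u y := by
    rw [inv_mul_eq_div, le_div_iff₀ hκ]
    linarith
  -- assemble
  have hTq : T (q : EuclideanSpace ℝ (Fin n)) ≤ 1 + S2 := by
    have h1 : T (q : EuclideanSpace ℝ (Fin n)) ≤ S2 := by
      rw [hS2def]
      exact Finset.single_le_sum (fun i _ => (hTpos _ (hωsub i.2)).le) hqG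
    linarith
  have hstep2 : ∫ z in Ω ∩ ball (q : EuclideanSpace ℝ (Fin n)) (α * r / 4), u z
      ≤ Duni * (κ⁻¹ * u y) := by
    calc ∫ z in Ω ∩ ball (q : EuclideanSpace ℝ (Fin n)) (α * r / 4), u z
        ≤ (κ * (volume (Ω ∩ ball y (α * r / 4))).toReal)⁻¹
            * ∫ z in Ω ∩ ball y (α * r / 4), u z := hMq
      _ ≤ Duni * ∫ z in Ω ∩ ball y (α * r / 4), u z :=
          mul_le_mul_of_nonneg_right hDy (hmass_nonneg y)
      _ ≤ Duni * (κ⁻¹ * u y) := mul_le_mul_of_nonneg_left hMy hDuni0.le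
  have hynn : 0 ≤ u y := (hupos y hyΩ).le
  have hrhs_nn : 0 ≤ Duni * (κ⁻¹ * u y) :=
    mul_nonneg hDuni0.le (mul_nonneg (inv_nonneg.2 hκ.le) hynn)
  have hstep3 : ∫ z in Ω ∩ ball y₀ (α * r / 4), u z
      ≤ (1 + S2) * (Duni * (κ⁻¹ * u y)) := by
    calc ∫ z in Ω ∩ ball y₀ (α * r / 4), u z
        ≤ T q * ∫ z in Ω ∩ ball (q : EuclideanSpace ℝ (Fin n)) (α * r / 4), u z := hMy₀
      _ ≤ T q * (Duni * (κ⁻¹ * u y)) :=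
          mul_le_mul_of_nonneg_left hstep2 (hTpos _ hqΩ).le
      _ ≤ (1 + S2) * (Duni * (κ⁻¹ * u y)) :=
          mul_le_mul_of_nonneg_right hTq hrhs_nn
  have hJα_nn : (0:ℝ) ≤ Jm / α ^ n := div_nonneg hJm0.le (pow_pos hα n).le
  have hA : (0:ℝ) ≤ Jm / α ^ n * ∫ z in Ω ∩ ball y₀ (α * r / 4), u z :=
    mul_nonneg hJα_nn (hmass_nonneg y₀)
  have hstep1 : b x * u x
      ≤ Jm / α ^ n * (1 + S1) * ∫ z in Ω ∩ ball y₀ (α * r / 4), u z := by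
    have h6 : b x * u x ≤ Jm / α ^ n * (S1 * ∫ z in Ω ∩ ball y₀ (α * r / 4), u z) :=
      hx_up.trans (mul_le_mul_of_nonneg_left hItot hJα_nn)
    nlinarith [hA]
  have hbmx : b ym * u x ≤ b x * u x :=
    mul_le_mul_of_nonneg_right (isMinOn_iff.1 hymmin x hxω) (hupos x hxΩ).le
  have hfinal : b ym * u x ≤ b ym * (C * u y) := by
    calc b ym * u x ≤ b x * u x := hbmx
      _ ≤ Jm / α ^ n * (1 + S1) * ∫ z in Ω ∩ ball y₀ (α * r / 4), u z := hstep1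
      _ ≤ Jm / α ^ n * (1 + S1) * ((1 + S2) * (Duni * (κ⁻¹ * u y))) :=
          mul_le_mul_of_nonneg_left hstep3
            (mul_nonneg hJα_nn (by linarith))
      _ = b ym * (C * u y) := by
          have hXC : C * b ym = Jm / α ^ n * (1 + S1) * ((1 + S2) * (Duni * κ⁻¹)) := by
            rw [hCdef]
            exact div_mul_cancel₀ _ (ne_of_gt hbm)
          calc Jm / α ^ n * (1 + S1) * ((1 + S2) * (Duni * (κ⁻¹ * u y)))
              = C * b ym * u y := by rw [hXC]; ring
            _ = b ym * (C * u y) := by ring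
  exact le_of_mul_le_mul_left hfinal hbm
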